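/- The interpretation of the probabilistic propositional logic in Γ-valued measures is sound for rule (L4): if μ is a Γ-valued measure on a bounded distributive lattice D, a,b ∈ D, p,q,r ∈ ℚ∩[0,1] with 0 ≤ p+q−r ≤ 1, and μ(a) ≥ p° and μ(b) ≥ q°, then μ(a∨b) ≥ (p+q−r)° or μ(a∧b) ≥ r°. -/

import Mathlib

open scoped Classical

/-- The carrier of the "doubled unit interval" `Γ`: pairs `(r, b)` ordered
lexicographically, where `b = true` represents an exact value `r°`
(which must be rational) and `b = false` represents an approximation `r⁻`
(which must satisfy `r > 0`). -/
def GammaCarrier : Set (Lex (ℝ × Bool)) :=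
  {p | 0 ≤ (ofLex p).1 ∧ (ofLex p).1 ≤ 1 ∧
    ((ofLex p).2 = true → ∃ q : ℚ, (q : ℝ) = (ofLex p).1) ∧
    ((ofLex p).2 = false → 0 < (ofLex p).1)}

/-- The doubled unit interval `Γ`, with the (total) order inherited from the
lexicographic product: `r* < s*` iff `r < s`, and `q⁻ < q°` immediately. -/
abbrev Gamma : Type := {p : Lex (ℝ × Bool) // p ∈ GammaCarrier}

theorem mem_gammaCarrier {a : ℝ} {b : Bool} (h1 : 0 ≤ a) (h2 : a ≤ 1)
    (h3 : b = true → ∃ q : ℚ, (q : ℝ) = a) (h4 : b = false → 0 < a) :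
    toLex (a, b) ∈ GammaCarrier := ⟨h1, h2, h3, h4⟩

/-- The underlying real number of an element of `Γ` (the map `γ`). -/
def γmap (x : Gamma) : ℝ := (ofLex x.1).1

/-- An element of `Γ` is exact iff it is of `°`-type. -/
def gexact (x : Gamma) : Prop := (ofLex x.1).2 = true

theorem gmem (x : Gamma) : 0 ≤ (ofLex x.1).1 ∧ (ofLex x.1).1 ≤ 1 ∧
    ((ofLex x.1).2 = true → ∃ q : ℚ, (q : ℝ) = (ofLex x.1).1) ∧
    ((ofLex x.1).2 = false → 0 < (ofLex x.1).1) := x.2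

/-- Smart constructor for `Γ`: clamps `r` into `[0,1]`, and produces the exact
value `r°` if `e = true` and `r` is rational (or `r = 0`), and `r⁻` otherwise. -/
noncomputable def mk' (r : ℝ) (e : Bool) : Gamma :=
  if h : (e = true ∧ ∃ q : ℚ, (q : ℝ) = max 0 (min 1 r)) ∨ max 0 (min 1 r) = 0 then
    ⟨toLex (max 0 (min 1 r), true),
      mem_gammaCarrier (le_max_left 0 _) (max_le zero_le_one (min_le_left 1 r))
        (fun _ => h.elim (fun h' => h'.2) (fun h0 => ⟨0, by rw [h0]; norm_num⟩))
        (fun hc => absurd hc (by simp))⟩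
  else
    ⟨toLex (max 0 (min 1 r), false),
      mem_gammaCarrier (le_max_left 0 _) (max_le zero_le_one (min_le_left 1 r))
        (fun hc => absurd hc (by simp))
        (fun _ => lt_of_le_of_ne (le_max_left 0 _) (fun h0 => h (Or.inr h0.symm)))⟩

/-- `0°`, the bottom element of `Γ`. -/
noncomputable def gzero : Gamma := mk' 0 true
/-- `1°`, the top element of `Γ`. -/
noncomputable def gone : Gamma := mk' 1 true
/-- The section `ι° : [0,1] → Γ`, `r ↦ r°` for rational `r` and `r ↦ r⁻` otherwise. -/
noncomputable def icircR (r : ℝ) : Gamma := mk' r true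
/-- The section `ι⁻ : [0,1] → Γ`, `0 ↦ 0°` and `r ↦ r⁻` for `r > 0`. -/
noncomputable def iminusR (r : ℝ) : Gamma := mk' r false
/-- The exact value `q°` of a rational `q ∈ [0,1]`. -/
noncomputable def gq (q : ℚ) : Gamma := mk' (q : ℝ) true
/-- `ι°` as a map on the unit interval. -/
noncomputable def icirc (r : Set.Icc (0:ℝ) 1) : Gamma := icircR r.1
/-- `ι⁻` as a map on the unit interval. -/
noncomputable def iminusI (r : Set.Icc (0:ℝ) 1) : Gamma := iminusR r.1
/-- `γ : Γ → [0,1]` as a map into the unit interval. -/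
noncomputable def gmapI (x : Gamma) : Set.Icc (0:ℝ) 1 := ⟨γmap x, (gmem x).1, (gmem x).2.1⟩

/-- The partial subtraction `∸` on `Γ` (meaningful when `y ≤ x`):
`r° ∸ s° = (r−s)°`, `r⁻ ∸ s° = (r−s)⁻`, and `r* ∸ s⁻ = (r−s)°` if `r−s ∈ ℚ`,
`(r−s)⁻` otherwise. -/
noncomputable def gsub (x y : Gamma) : Gamma :=
  mk' (γmap x - γmap y)
    (if (gexact x ∧ gexact y) ∨ (¬ gexact y ∧ ∃ q : ℚ, (q : ℝ) = γmap x - γmap y)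
      then true else false)

/-- The second partial subtraction `∸̃` on `Γ` (meaningful when `y ≤ x`):
`x ∸̃ x = 0°` and, for `y < x`, `r° ∸̃ s° = r⁻ ∸̃ s⁻ = r⁻ ∸̃ s° = (r−s)⁻` and
`r° ∸̃ s⁻ = (r−s)°` if `r−s ∈ ℚ`, `(r−s)⁻` otherwise. -/
noncomputable def gsubt (x y : Gamma) : Gamma :=
  mk' (γmap x - γmap y)
    (if gexact x ∧ ¬ gexact y ∧ ∃ q : ℚ, (q : ℝ) = γmap x - γmap y then true else false)

/-- The partial addition `+` on `Γ` (meaningful when `x ≤ 1° ∸ y`):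
`r° + s° = (r+s)°` and any sum involving a `⁻`-argument is of `⁻`-type. -/
noncomputable def gadd (x y : Gamma) : Gamma :=
  mk' (γmap x + γmap y) (if gexact x ∧ gexact y then true else false)

/-- A `Γ`-valued (finitely additive, probability) measure on a bounded lattice. -/
def IsGMeasure {D : Type*} [Lattice D] [BoundedOrder D] (μ : D → Gamma) : Prop :=
  Monotone μ ∧ μ ⊥ = gzero ∧ μ ⊤ = gone ∧
  ∀ a b : D, gsubt (μ a) (μ (a ⊓ b)) ≤ gsub (μ (a ⊔ b)) (μ b) ∧
    gsubt (μ (a ⊔ b)) (μ b) ≤ gsub (μ a) (μ (a ⊓ b))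

section Helpers

theorem gamma_le_iff (x y : Gamma) : x ≤ y ↔
    γmap x < γmap y ∨ (γmap x = γmap y ∧ ((ofLex x.1).2 ≤ (ofLex y.1).2)) := by
  change x.1 ≤ y.1 ↔ _
  exact Prod.Lex.le_iff

theorem γmap_mono {x y : Gamma} (h : x ≤ y) : γmap x ≤ γmap y := by
  rcases (gamma_le_iff x y).1 h with h | h
  · exact le_of_lt h
  · exact le_of_eq h.1

theorem γmap_mk' (x : ℝ) (e : Bool) : γmap (mk' x e) = max 0 (min 1 x) := by
  unfold mk'; split <;> rfl

theorem mk'_true {x : ℝ} (q : ℚ) (h0 : 0 ≤ x) (h1 : x ≤ 1) (hq : (q : ℝ) = x) :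
    mk' x true = ⟨toLex (x, true), mem_gammaCarrier h0 h1 (fun _ => ⟨q, hq⟩)
      (fun hc => by simp at hc)⟩ := by
  have hmm : max 0 (min 1 x) = x := by
    rw [min_eq_right h1, max_eq_right h0]
  unfold mk'
  rw [dif_pos (Or.inl ⟨rfl, q, by rw [hmm, hq]⟩)]
  exact Subtype.ext (show toLex (max 0 (min 1 x), true) = _ by rw [hmm])

theorem mk'_false {x : ℝ} (h0 : 0 < x) (h1 : x ≤ 1) :
    mk' x false = ⟨toLex (x, false), mem_gammaCarrier (le_of_lt h0) h1
      (fun hc => by simp at hc) (fun _ => h0)⟩ := by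
  have hmm : max 0 (min 1 x) = x := by
    rw [min_eq_right h1, max_eq_right (le_of_lt h0)]
  have hcond : ¬ ((false = true ∧ ∃ q : ℚ, (q : ℝ) = max 0 (min 1 x)) ∨
      max 0 (min 1 x) = 0) := by
    rw [hmm]
    rintro (⟨h, _⟩ | h)
    · simp at h
    · exact absurd h (ne_of_gt h0)
  unfold mk'
  rw [dif_neg hcond]
  exact Subtype.ext (show toLex (max 0 (min 1 x), false) = _ by rw [hmm])

theorem bool_le_true_iff {t : Bool} : (true ≤ t) ↔ t = true := by
  cases t <;> simp

theorem gq_le_iff {s : ℚ} (h0 : (0:ℝ) ≤ s) (h1 : (s:ℝ) ≤ 1) (x : Gamma) :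
    gq s ≤ x ↔ (s : ℝ) < γmap x ∨ ((s:ℝ) = γmap x ∧ gexact x) := by
  unfold gq
  rw [mk'_true s h0 h1 rfl, gamma_le_iff]
  exact or_congr Iff.rfl (and_congr Iff.rfl bool_le_true_iff)

end Helpers

/-- soundness of rule (L4): if `μ` is a `Γ`-valued measure on a
bounded distributive lattice `D`, `p, q, r ∈ ℚ ∩ [0,1]` with
`0 ≤ p + q − r ≤ 1`, `μ(a) ≥ p°` and `μ(b) ≥ q°`, then
`μ(a ∨ b) ≥ (p+q−r)°` or `μ(a ∧ b) ≥ r°`. -/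
theorem stmt_19 {D : Type*} [DistribLattice D] [BoundedOrder D]
    (μ : D → Gamma) (hμ : IsGMeasure μ) (a b : D) (p q r : ℚ)
    (hp0 : 0 ≤ p) (hp1 : p ≤ 1) (hq0 : 0 ≤ q) (hq1 : q ≤ 1)
    (hr0 : 0 ≤ r) (hr1 : r ≤ 1)
    (h1 : 0 ≤ p + q - r) (h2 : p + q - r ≤ 1)
    (ha : gq p ≤ μ a) (hb : gq q ≤ μ b) :
    gq (p + q - r) ≤ μ (a ⊔ b) ∨ gq r ≤ μ (a ⊓ b) := by
  
  obtain ⟨hmono, -, -, hax⟩ := hμ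
  by_contra hcon
  push_neg at hcon
  obtain ⟨hS, hI⟩ := hcon
  have hp0' : (0:ℝ) ≤ (p:ℚ) := by exact_mod_cast hp0
  have hp1' : ((p:ℚ):ℝ) ≤ 1 := by exact_mod_cast hp1
  have hq0' : (0:ℝ) ≤ (q:ℚ) := by exact_mod_cast hq0
  have hq1' : ((q:ℚ):ℝ) ≤ 1 := by exact_mod_cast hq1
  have hr0' : (0:ℝ) ≤ (r:ℚ) := by exact_mod_cast hr0
  have hr1' : ((r:ℚ):ℝ) ≤ 1 := by exact_mod_cast hr1
  have hs0' : (0:ℝ) ≤ ((p + q - r : ℚ):ℝ) := by exact_mod_cast h1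
  have hs1' : ((p + q - r : ℚ):ℝ) ≤ 1 := by exact_mod_cast h2
  -- basic bounds
  have hIA : γmap (μ (a ⊓ b)) ≤ γmap (μ a) := γmap_mono (hmono inf_le_left)
  have hBS : γmap (μ b) ≤ γmap (μ (a ⊔ b)) := γmap_mono (hmono le_sup_right)
  have hI0 : 0 ≤ γmap (μ (a ⊓ b)) := (gmem (μ (a ⊓ b))).1
  have hA1 : γmap (μ a) ≤ 1 := (gmem (μ a)).2.1
  have hS1 : γmap (μ (a ⊔ b)) ≤ 1 := (gmem (μ (a ⊔ b))).2.1
  have hB0 : 0 ≤ γmap (μ b) := (gmem (μ b)).1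
  -- key inequality from the measure axiom
  have hkey : γmap (μ a) - γmap (μ (a ⊓ b)) ≤ γmap (μ (a ⊔ b)) - γmap (μ b) := by
    have h := γmap_mono (hax a b).1
    rw [gsubt, gsub, γmap_mk', γmap_mk'] at h
    rw [min_eq_right (by linarith), max_eq_right (by linarith),
      min_eq_right (by linarith), max_eq_right (by linarith)] at h
    exact h
  -- extract info from hypotheses
  have ha' := (gq_le_iff hp0' hp1' (μ a)).1 ha
  have hb' := (gq_le_iff hq0' hq1' (μ b)).1 hb
  have hS' := (gq_le_iff hs0' hs1' (μ (a ⊔ b))).mpr.mt (show μ (a ⊔ b) < gq (p + q - r) from hS).not_ge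
  have hI' := (gq_le_iff hr0' hr1' (μ (a ⊓ b))).mpr.mt (show μ (a ⊓ b) < gq r from hI).not_ge
  push_neg at hS' hI'
  have hpA : (p:ℝ) ≤ γmap (μ a) := by
    rcases ha' with h | h
    · exact h.le
    · exact h.1.le
  have hqB : (q:ℝ) ≤ γmap (μ b) := by
    rcases hb' with h | h
    · exact h.le
    · exact h.1.le
  have hSle : γmap (μ (a ⊔ b)) ≤ (p:ℝ) + q - r := by
    have := hS'.1; push_cast at this; linarith
  have hIle : γmap (μ (a ⊓ b)) ≤ (r:ℝ) := hI'.1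
  -- all relations are equalities
  have hA : γmap (μ a) = (p:ℝ) := by linarith
  have hB : γmap (μ b) = (q:ℝ) := by linarith
  have hSeq : γmap (μ (a ⊔ b)) = (p:ℝ) + q - r := by linarith
  have hIeq : γmap (μ (a ⊓ b)) = (r:ℝ) := by linarith
  -- exactness information
  have hea : gexact (μ a) := by
    rcases ha' with h | h
    · exact absurd h (by rw [hA]; exact lt_irrefl _)
    · exact h.2
  have heb : gexact (μ b) := by
    rcases hb' with h | h
    · exact absurd h (by rw [hB]; exact lt_irrefl _)
    · exact h.2
  have hneS : ¬ gexact (μ (a ⊔ b)) := hS'.2 (by rw [hSeq]; push_cast; ring)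
  have hneI : ¬ gexact (μ (a ⊓ b)) := hI'.2 hIeq.symm
  -- r ≤ p since γmap (μ b) ≤ γmap (μ (a ⊔ b))
  have hrp : (r:ℝ) ≤ (p:ℝ) := by linarith
  rcases eq_or_lt_of_le hrp with hrp' | hrp'
  · -- p = r : then μ b = q° ≤ μ (a ⊔ b) = q⁻, contradiction
    rcases (gamma_le_iff (μ b) (μ (a ⊔ b))).1 (hmono le_sup_right) with h | h
    · rw [hB, hSeq, ← hrp'] at h; linarith
    · have heb' : (ofLex (μ b).1).2 = true := heb
      rw [heb'] at h
      exact hneS (bool_le_true_iff.1 h.2)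
  · -- r < p : use the measure axiom with types
    have h := (hax a b).1
    have hAI : γmap (μ a) - γmap (μ (a ⊓ b)) = (p:ℝ) - r := by rw [hA, hIeq]
    have hSB : γmap (μ (a ⊔ b)) - γmap (μ b) = (p:ℝ) - r := by rw [hSeq, hB]; ring
    have hd0 : (0:ℝ) < (p:ℝ) - r := by linarith
    have hd1 : (p:ℝ) - (r:ℝ) ≤ 1 := by linarith
    rw [gsubt, gsub] at h
    rw [if_pos ⟨hea, hneI, ⟨p - r, by push_cast; rw [hAI]⟩⟩] at h
    rw [if_neg (by
      rintro (⟨h', -⟩ | ⟨h', -⟩)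
      · exact hneS h'
      · exact h' heb)] at h
    rw [hAI, hSB] at h
    rw [mk'_true (p - r) hd0.le hd1 (by push_cast; ring), mk'_false hd0 hd1] at h
    rcases (gamma_le_iff _ _).1 h with h | h
    · exact absurd h (lt_irrefl _)
    · have h2 : (true : Bool) ≤ false := h.2
      exact absurd h2 (by decide)
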